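/- If x₁,…,x_n ∈ ∂B₂^d satisfy ‖x_i − x_j‖ ≥ θ for all i ≠ j and for every x ∈ ∂B₂^d there is an i with ‖x − x_i‖ ≤ θ, then the convex hull Q of {x₁,…,x_n} satisfies d_H(Q, B₂^d) ≤ θ²/2. -/

import Mathlib

open MeasureTheory
open scoped RealInnerProductSpace

theorem net_convex_hull_hausdorff (d n : ℕ) (hd : 2 ≤ d) (θ : ℝ)
    (x : Fin n → EuclideanSpace ℝ (Fin d)) (hx : ∀ i, ‖x i‖ = 1)
    (hsep : ∀ i j, i ≠ j → θ ≤ ‖x i - x j‖)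
    (hnet : ∀ z : EuclideanSpace ℝ (Fin d), ‖z‖ = 1 → ∃ i, ‖z - x i‖ ≤ θ) :
    Metric.hausdorffDist (convexHull ℝ (Set.range x))
        (Metric.closedBall (0 : EuclideanSpace ℝ (Fin d)) 1) ≤ θ ^ 2 / 2 := by
  set Q : Set (EuclideanSpace ℝ (Fin d)) := convexHull ℝ (Set.range x) with hQ
  -- there is a unit vector
  have hdpos : 0 < d := by omega
  have hunit : ∃ u : EuclideanSpace ℝ (Fin d), ‖u‖ = 1 :=
    ⟨EuclideanSpace.single ⟨0, hdpos⟩ (1 : ℝ), by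
      simp [EuclideanSpace.norm_single]⟩
  -- n ≠ 0
  have hn : Set.range x |>.Nonempty := by
    obtain ⟨u, hu⟩ := hunit
    obtain ⟨i, -⟩ := hnet u hu
    exact ⟨x i, ⟨i, rfl⟩⟩
  have hQne : Q.Nonempty := hn.mono (subset_convexHull ℝ _)
  have hQconv : Convex ℝ Q := convex_convexHull ℝ _
  have hQcompact : IsCompact Q := (Set.finite_range x).isCompact_convexHull (𝕜 := ℝ)
  have hQcomplete : IsComplete Q := hQcompact.isClosed.isComplete
  -- Q ⊆ closed ball
  have hQsub : Q ⊆ Metric.closedBall (0 : EuclideanSpace ℝ (Fin d)) 1 := by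
    apply convexHull_min _ (convex_closedBall _ _)
    rintro _ ⟨i, rfl⟩
    simp [mem_closedBall_zero_iff, (hx i).le]
  -- inner product bound from the net property
  have hinner : ∀ u : EuclideanSpace ℝ (Fin d), ‖u‖ = 1 →
      ∃ i, 1 - θ ^ 2 / 2 ≤ ⟪u, x i⟫ := by
    intro u hu
    obtain ⟨i, hi⟩ := hnet u hu
    refine ⟨i, ?_⟩
    have hsq : ‖u - x i‖ ^ 2 ≤ θ ^ 2 :=
      pow_le_pow_left₀ (norm_nonneg _) hi 2
    have := norm_sub_sq_real u (x i)
    rw [hu, hx i] at this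
    nlinarith
  have hδ : (0:ℝ) ≤ θ ^ 2 / 2 := by positivity
  apply Metric.hausdorffDist_le_of_infDist hδ
  · intro q hq
    have hq' : q ∈ Metric.closedBall (0 : EuclideanSpace ℝ (Fin d)) 1 := hQsub hq
    calc Metric.infDist q (Metric.closedBall (0 : EuclideanSpace ℝ (Fin d)) 1) = 0 :=
          Metric.infDist_zero_of_mem hq'
      _ ≤ θ ^ 2 / 2 := hδ
  · intro z hz
    rw [Metric.mem_closedBall, dist_zero_right] at hz
    -- nearest point projection
    obtain ⟨p, hpQ, hp⟩ := exists_norm_eq_iInf_of_complete_convex hQne hQcomplete hQconv z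
    have hproj : ∀ w ∈ Q, ⟪z - p, w - p⟫ ≤ 0 :=
      (norm_eq_iInf_iff_real_inner_le_zero hQconv hpQ).mp hp
    have hkey : ‖z - p‖ ≤ θ ^ 2 / 2 := by
      rcases eq_or_lt_of_le (norm_nonneg (z - p)) with h0 | h0
      · rw [← h0]; exact hδ
      · set t := ‖z - p‖ with ht
        set u : EuclideanSpace ℝ (Fin d) := t⁻¹ • (z - p) with hu
        have hunorm : ‖u‖ = 1 := by
          rw [hu, norm_smul, norm_inv, Real.norm_eq_abs, abs_of_pos h0, ← ht,
            inv_mul_cancel₀ h0.ne']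
        obtain ⟨i, hi⟩ := hinner u hunorm
        -- ⟪u, x i⟫ ≤ ⟪u, p⟫
        have h1 : ⟪z - p, x i - p⟫ ≤ 0 :=
          hproj (x i) (subset_convexHull ℝ _ ⟨i, rfl⟩)
        have h2 : ⟪u, x i⟫ ≤ ⟪u, p⟫ := by
          have : ⟪u, x i - p⟫ ≤ 0 := by
            rw [hu, real_inner_smul_left]
            exact mul_nonpos_of_nonneg_of_nonpos (by positivity) h1
          rw [inner_sub_right] at this
          linarith
        have h3 : ⟪u, z - p⟫ = t := by
          rw [hu, real_inner_smul_left, real_inner_self_eq_norm_sq, ← ht]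
          field_simp
        have h4 : ⟪u, z⟫ = ⟪u, p⟫ + t := by
          rw [inner_sub_right] at h3; linarith
        have h5 : ⟪u, z⟫ ≤ 1 := by
          calc ⟪u, z⟫ ≤ ‖u‖ * ‖z‖ := real_inner_le_norm u z
            _ ≤ 1 := by rw [hunorm]; simpa using hz
        linarith
    calc Metric.infDist z Q ≤ dist z p := Metric.infDist_le_dist_of_mem hpQ
      _ ≤ θ ^ 2 / 2 := by rw [dist_eq_norm]; exact hkey
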